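/- Let F(x,q) = ∑_{s,t,u≥0} q^{s(s+1)/2 + t(t+1) + 3u(u+1)/2 + st + su + 2tu} x^{s+2t+3u} / ((q;q)_s (q;q)_t (q;q)_u). Then F satisfies F(x,q) = (1+xq)(1 + x²q² + x²q³) F(xq, q) − x⁴q⁷ (1+xq)(1+xq²) F(xq², q). -/

import Mathlib

open Finset PowerSeries

/-- `(q;q)_n = ∏_{0 ≤ j < n} (1 - q^{j+1})`. -/
noncomputable def qPoch (n : ℕ) : PowerSeries ℚ :=
  ∏ j ∈ Finset.range n, (1 - (PowerSeries.X : PowerSeries ℚ) ^ (j + 1))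

/-- The power series `q` in `ℚ⟦q⟧`. -/
noncomputable def qq : PowerSeries ℚ := PowerSeries.X

/-- `G(x,q) = ∑_{s ≥ 0} q^{s(s+1)} x^{2s} / (q;q)_s`, as an element of `ℚ⟦q⟧⟦x⟧`:
the coefficient of `x^n` is `q^{s(s+1)}/(q;q)_s` if `n = 2s`, and `0` otherwise. -/
noncomputable def Gser : PowerSeries (PowerSeries ℚ) :=
  PowerSeries.mk fun n =>
    if 2 ∣ n then qq ^ ((n / 2) * (n / 2 + 1)) * (qPoch (n / 2))⁻¹ else 0

/-- The coefficient `f_n` of `x^n` in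
`F(x,q) = ∑_{s,t,u ≥ 0} q^{s(s+1)/2 + t(t+1) + 3u(u+1)/2 + st + su + 2tu}
  x^{s+2t+3u}/((q;q)_s (q;q)_t (q;q)_u)`,
i.e. the (finite) sum over `s, t, u ≥ 0` with `s + 2t + 3u = n`. -/
noncomputable def fcoef (n : ℕ) : PowerSeries ℚ :=
  ∑ t ∈ Finset.range (n / 2 + 1), ∑ u ∈ Finset.range (n / 3 + 1),
    if 2 * t + 3 * u ≤ n then
      qq ^ ((n - 2 * t - 3 * u) * (n - 2 * t - 3 * u + 1) / 2 + t * (t + 1) +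
            3 * (u * (u + 1) / 2) + (n - 2 * t - 3 * u) * t +
            (n - 2 * t - 3 * u) * u + 2 * t * u) *
        (qPoch (n - 2 * t - 3 * u))⁻¹ * (qPoch t)⁻¹ * (qPoch u)⁻¹
    else 0

/-- `F(x,q)` as an element of `ℚ⟦q⟧⟦x⟧`. -/
noncomputable def Fser : PowerSeries (PowerSeries ℚ) :=
  PowerSeries.mk fcoef

/-! ### Auxiliary material -/

lemma qPoch_zero : qPoch 0 = 1 := by simp [qPoch]

lemma qPoch_succ (n : ℕ) : qPoch (n+1) = qPoch n * (1 - qq ^ (n+1)) :=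
  Finset.prod_range_succ _ _

lemma constantCoeff_qPoch (n : ℕ) : constantCoeff (qPoch n) = 1 := by
  induction n with
  | zero => simp [qPoch_zero]
  | succ n ih => rw [qPoch_succ, map_mul, ih, one_mul, map_sub, map_one, map_pow]
                 simp [qq]

lemma qPoch_cc_ne (n : ℕ) : constantCoeff (qPoch n) ≠ 0 := by
  rw [constantCoeff_qPoch]; norm_num

lemma qPoch_mul_inv (n : ℕ) : qPoch n * (qPoch n)⁻¹ = 1 :=
  PowerSeries.mul_inv_cancel _ (qPoch_cc_ne n)

lemma qPoch_inv_zero : (qPoch 0)⁻¹ = 1 := by rw [qPoch_zero, inv_one]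

lemma tri_succ (n : ℕ) : (n+1)*(n+2)/2 = n*(n+1)/2 + (n+1) := by
  rw [show (n+1)*(n+2) = n*(n+1) + 2*(n+1) by ring]; omega

/-- Euler coefficients `e n = q^{n(n+1)/2}/(q;q)_n`. -/
noncomputable def e (n : ℕ) : PowerSeries ℚ := qq ^ (n*(n+1)/2) * (qPoch n)⁻¹

noncomputable def Eser : PowerSeries (PowerSeries ℚ) := PowerSeries.mk e

lemma e_zero : e 0 = 1 := by simp [e, qPoch_inv_zero]

lemma e_rec (n : ℕ) : e (n+1) = qq ^ (n+1) * e (n+1) + qq ^ (n+1) * e n := by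
  have h : (1 - qq ^ (n+1)) * e (n+1) = qq ^ (n+1) * e n := by
    rw [e, e, qPoch_succ, PowerSeries.mul_inv_rev]
    have h2 : (1 - qq ^ (n+1)) * (qq ^ ((n+1)*(n+2)/2) * ((1 - qq^(n+1))⁻¹ * (qPoch n)⁻¹))
        = ((1 - qq ^ (n+1)) * (1 - qq^(n+1))⁻¹) * (qq ^ ((n+1)*(n+2)/2) * (qPoch n)⁻¹) := by
      ring
    rw [h2, PowerSeries.mul_inv_cancel, one_mul, tri_succ, pow_add,
      mul_comm (qq ^ (n*(n+1)/2)) _, mul_assoc]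
    · rw [map_sub, map_one, map_pow]
      simp [qq]
  linear_combination h

/-! ### Fraction field machinery -/

abbrev K : Type := FractionRing (PowerSeries ℚ)

noncomputable def φ : PowerSeries ℚ →+* K := algebraMap _ _

lemma φ_inj : Function.Injective φ := IsFractionRing.injective _ _

lemma φ_ne_zero {f : PowerSeries ℚ} (h : f ≠ 0) : φ f ≠ 0 := by
  intro h0; exact h (φ_inj (by rw [h0, map_zero]))

lemma ne_zero_of_cc {f : PowerSeries ℚ} (h : constantCoeff f ≠ 0) : f ≠ 0 := by
  intro h0; rw [h0, map_zero] at h; exact h rfl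

lemma φ_inv_of {f : PowerSeries ℚ} (h : constantCoeff f ≠ 0) :
    φ (f⁻¹) = (φ f)⁻¹ := by
  refine eq_inv_of_mul_eq_one_right ?_
  rw [← map_mul, PowerSeries.mul_inv_cancel _ h, map_one]

lemma φ_qPoch_ne (n : ℕ) : φ (qPoch n) ≠ 0 :=
  φ_ne_zero (ne_zero_of_cc (qPoch_cc_ne n))

lemma φ_qPoch_inv (n : ℕ) : φ ((qPoch n)⁻¹) = (φ (qPoch n))⁻¹ :=
  φ_inv_of (qPoch_cc_ne n)

lemma one_sub_qq_cc (k : ℕ) : constantCoeff (1 - qq ^ (k+1)) ≠ 0 := by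
  simp [qq]

lemma φ_one_sub_inv (k : ℕ) : φ ((1 - qq^(k+1))⁻¹) = (φ (1 - qq^(k+1)))⁻¹ :=
  φ_inv_of (one_sub_qq_cc k)

lemma φ_one_sub_qq_ne (k : ℕ) : φ (1 - qq ^ (k+1)) ≠ 0 :=
  φ_ne_zero (ne_zero_of_cc (one_sub_qq_cc k))

/-! ### Gaussian binomial coefficients -/

noncomputable def b (j u : ℕ) : PowerSeries ℚ :=
  qq ^ (u*(u+1)/2) * qPoch j * (qPoch u)⁻¹ * (qPoch (j-u))⁻¹

lemma b_zero (j : ℕ) : b j 0 = 1 := by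
  rw [b]
  simp only [Nat.zero_mul, Nat.zero_div, pow_zero, one_mul, Nat.sub_zero, qPoch_inv_zero,
    mul_one]
  exact qPoch_mul_inv j

lemma b_diag (j : ℕ) : b j j = qq ^ (j*(j+1)/2) := by
  rw [b, Nat.sub_self, qPoch_inv_zero, mul_one, mul_assoc, qPoch_mul_inv, mul_one]

lemma b_top (j : ℕ) : b (j+1) (j+1) = qq^(j+1) * b j j := by
  rw [b_diag, b_diag, tri_succ, pow_add]; ring

lemma b_pascal (v w : ℕ) :
    b (v+1+w+1) (v+1) = b (v+1+w) (v+1) + qq^(v+1+w+1) * b (v+1+w) v := by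
  apply φ_inj
  have h3 : (v+1+w+1) - (v+1) = w + 1 := by omega
  have h4 : (v+1+w) - (v+1) = w := by omega
  have h5 : (v+1+w) - v = w + 1 := by omega
  simp only [b, h3, h4, h5]
  rw [show qPoch (v+1+w+1) = qPoch (v+1+w) * (1 - qq^(v+1+w+1)) from qPoch_succ _,
    show qPoch (v+1) = qPoch v * (1 - qq^(v+1)) from qPoch_succ _,
    show qPoch (w+1) = qPoch w * (1 - qq^(w+1)) from qPoch_succ _,
    show (v+1)*(v+1+1)/2 = v*(v+1)/2 + (v+1) from tri_succ v]
  simp only [PowerSeries.mul_inv_rev, map_add, map_mul, map_pow, φ_qPoch_inv, φ_one_sub_inv]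
  set P0 := φ (qPoch (v+1+w)) with hP0
  set Pv := φ (qPoch v) with hPv
  set Pw := φ (qPoch w) with hPw
  set A1 := φ (1 - qq^(v+1)) with hA1
  set A2 := φ (1 - qq^(w+1)) with hA2
  set A3 := φ (1 - qq^(v+1+w+1)) with hA3
  have nv : Pv ≠ 0 := hPv ▸ φ_qPoch_ne v
  have nw : Pw ≠ 0 := hPw ▸ φ_qPoch_ne w
  have n1 : A1 ≠ 0 := hA1 ▸ φ_one_sub_qq_ne v
  have n2 : A2 ≠ 0 := hA2 ▸ φ_one_sub_qq_ne w
  have n3 : A3 ≠ 0 := hA3 ▸ φ_one_sub_qq_ne (v+1+w)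
  field_simp [nv, nw, n1, n2, n3]
  rw [hA1, hA2, hA3]
  simp only [map_sub, map_one, map_pow]
  ring

lemma b_pascal' (j u : ℕ) (h : u < j) :
    b (j+1) (u+1) = b j (u+1) + qq^(j+1) * b j u := by
  obtain ⟨w, rfl⟩ : ∃ w, j = u + 1 + w := ⟨j - u - 1, by omega⟩
  exact b_pascal u w

/-! ### Euler product -/

lemma rescale_C' (a c : PowerSeries ℚ) :
    rescale a (PowerSeries.C c) = PowerSeries.C c := by
  refine PowerSeries.ext fun n => ?_
  rw [coeff_rescale, coeff_C]
  split <;> simp_all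

lemma Euler1 : Eser = (1 + PowerSeries.C qq * PowerSeries.X) * rescale qq Eser := by
  refine PowerSeries.ext fun n => ?_
  rw [add_mul, one_mul, map_add,
    show (PowerSeries.C qq * PowerSeries.X * rescale qq Eser)
      = PowerSeries.X * (PowerSeries.C qq * rescale qq Eser) by ring]
  cases n with
  | zero =>
      rw [coeff_zero_X_mul, add_zero, coeff_rescale]
      simp [Eser]
  | succ n =>
      rw [coeff_succ_X_mul, coeff_C_mul, coeff_rescale, coeff_rescale, Eser, coeff_mk,
        coeff_mk, ← mul_assoc, ← pow_succ']
      exact e_rec n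

noncomputable def prodE (j : ℕ) : PowerSeries (PowerSeries ℚ) :=
  ∏ m ∈ Finset.range j, (1 + PowerSeries.C (qq^(m+1)) * PowerSeries.X)

lemma rescale_one_add_CX (a c : PowerSeries ℚ) :
    rescale a (1 + PowerSeries.C c * PowerSeries.X)
      = 1 + PowerSeries.C (c * a) * PowerSeries.X := by
  rw [map_add, map_one, map_mul, rescale_X, rescale_C', map_mul, ← mul_assoc, ← map_mul]

lemma E_iter (j : ℕ) : Eser = prodE j * rescale (qq^j) Eser := by
  induction j with
  | zero => simp [prodE, pow_zero, rescale_one]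
  | succ j ih =>
    calc Eser = prodE j * rescale (qq^j) Eser := ih
    _ = prodE j * rescale (qq^j) ((1 + PowerSeries.C qq * PowerSeries.X) * rescale qq Eser) := by
        rw [← Euler1]
    _ = prodE (j+1) * rescale (qq^(j+1)) Eser := by
        rw [map_mul, rescale_rescale, ← pow_succ', rescale_one_add_CX, ← pow_succ']
        simp only [prodE, Finset.prod_range_succ]
        ring

lemma prodE_eq (j : ℕ) :
    prodE j = ∑ u ∈ Finset.range (j+1),
      PowerSeries.C (b j u) * PowerSeries.X ^ u := by
  induction j with
  | zero => simp [prodE, b_zero]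
  | succ j ih =>
    have hstep : prodE (j+1) = prodE j * (1 + PowerSeries.C (qq^(j+1)) * PowerSeries.X) := by
      simp only [prodE, Finset.prod_range_succ]
    rw [hstep, ih, mul_add, mul_one, Finset.sum_mul]
    have e1 : ∑ u ∈ Finset.range (j+1+1),
          PowerSeries.C (b (j+1) u) * PowerSeries.X ^ u
        = (∑ i ∈ Finset.range (j+1),
            PowerSeries.C (b (j+1) (i+1)) * PowerSeries.X ^ (i+1))
          + PowerSeries.C (b (j+1) 0) * PowerSeries.X ^ 0 :=
      Finset.sum_range_succ' _ (j+1)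
    have e2 : (∑ i ∈ Finset.range (j+1),
          PowerSeries.C (b (j+1) (i+1)) * PowerSeries.X ^ (i+1))
        = (∑ i ∈ Finset.range j,
            PowerSeries.C (b (j+1) (i+1)) * PowerSeries.X ^ (i+1))
          + PowerSeries.C (b (j+1) (j+1)) * PowerSeries.X ^ (j+1) :=
      Finset.sum_range_succ _ j
    have e3 : (∑ i ∈ Finset.range j,
          PowerSeries.C (b (j+1) (i+1)) * PowerSeries.X ^ (i+1))
        = (∑ i ∈ Finset.range j,
            PowerSeries.C (b j (i+1)) * PowerSeries.X ^ (i+1))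
          + (∑ i ∈ Finset.range j,
            PowerSeries.C (qq^(j+1) * b j i) * PowerSeries.X ^ (i+1)) := by
      rw [← Finset.sum_add_distrib]
      refine Finset.sum_congr rfl fun i hi => ?_
      rw [b_pascal' j i (Finset.mem_range.mp hi), map_add, add_mul, map_mul]
    have e4 : (∑ u ∈ Finset.range (j+1),
          PowerSeries.C (b j u) * PowerSeries.X ^ u)
        = (∑ i ∈ Finset.range j,
            PowerSeries.C (b j (i+1)) * PowerSeries.X ^ (i+1))
          + PowerSeries.C (b j 0) * PowerSeries.X ^ 0 :=
      Finset.sum_range_succ' _ j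
    have e5 : (∑ u ∈ Finset.range (j+1),
          PowerSeries.C (b j u) * PowerSeries.X ^ u
            * (PowerSeries.C (qq^(j+1)) * PowerSeries.X))
        = (∑ i ∈ Finset.range j,
            PowerSeries.C (qq^(j+1) * b j i) * PowerSeries.X ^ (i+1))
          + PowerSeries.C (qq^(j+1) * b j j) * PowerSeries.X ^ (j+1) := by
      rw [show (∑ u ∈ Finset.range (j+1),
          PowerSeries.C (b j u) * PowerSeries.X ^ u
            * (PowerSeries.C (qq^(j+1)) * PowerSeries.X))
          = ∑ u ∈ Finset.range (j+1),
            PowerSeries.C (qq^(j+1) * b j u) * PowerSeries.X ^ (u+1) from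
        Finset.sum_congr rfl fun u _ => by rw [map_mul, pow_succ]; ring]
      exact Finset.sum_range_succ _ j
    rw [e5, e4, e1, e2, e3, b_top, b_zero, b_zero, map_mul]
    ring

/-! ### F = E * G -/

noncomputable def g (n : ℕ) : PowerSeries ℚ := qq ^ (n*(n+1)) * (qPoch n)⁻¹

lemma expo (s t u : ℕ) :
    s*(s+1)/2 + t*(t+1) + 3*(u*(u+1)/2) + s*t + s*u + 2*t*u
      = (t+u)*(t+u+1) + u*(u+1)/2 + (t+u)*s + s*(s+1)/2 := by
  rw [show 2*t*u = 2*(t*u) from by ring,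
    show (t+u)*(t+u+1) = t*(t+1) + (u*(u+1) + 2*(t*u)) from by ring,
    show (t+u)*s = s*t + s*u from by ring]
  have hs : 2 ∣ s*(s+1) := (Nat.even_mul_succ_self s).two_dvd
  have hu : 2 ∣ u*(u+1) := (Nat.even_mul_succ_self u).two_dvd
  generalize s*(s+1) = P at *
  generalize t*(t+1) = Q at *
  generalize u*(u+1) = R at *
  generalize t*u = c at *
  generalize s*t = a at *
  generalize s*u = d at *
  omega

lemma termwise (s t u : ℕ) :
    qq ^ (s*(s+1)/2 + t*(t+1) + 3*(u*(u+1)/2) + s*t + s*u + 2*t*u)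
      * (qPoch s)⁻¹ * (qPoch t)⁻¹ * (qPoch u)⁻¹
    = g (t+u) * (b (t+u) u * ((qq^(t+u))^s * e s)) := by
  apply φ_inj
  rw [expo s t u]
  simp only [g, b, e, map_mul, map_pow, φ_qPoch_inv]
  rw [show t + u - u = t from by omega]
  field_simp [φ_qPoch_ne]
  ring

lemma coeff_prodE (j i : ℕ) :
    PowerSeries.coeff i (prodE j) = if i ≤ j then b j i else 0 := by
  rw [prodE_eq, map_sum]
  simp only [PowerSeries.coeff_C_mul_X_pow]
  rw [Finset.sum_ite_eq (Finset.range (j+1)) i (fun u => b j u)]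
  simp [Nat.lt_succ_iff]

lemma e_expand (j m : ℕ) :
    e m = ∑ u ∈ Finset.range (m+1),
      (if u ≤ j then b j u else 0) * ((qq^j)^(m-u) * e (m-u)) := by
  have h := congrArg (PowerSeries.coeff m) (E_iter j)
  simp only [Eser, coeff_mk, PowerSeries.coeff_mul,
    Finset.Nat.sum_antidiagonal_eq_sum_range_succ_mk] at h
  rw [h]
  refine Finset.sum_congr rfl fun u hu => ?_
  simp only [coeff_prodE, coeff_rescale, Eser, coeff_mk]

lemma sum_range_ite {M : Type*} [AddCommMonoid M] (m n : ℕ) (h : m ≤ n) (F : ℕ → M) :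
    ∑ u ∈ Finset.range (n+1), (if u ≤ m then F u else 0)
      = ∑ u ∈ Finset.range (m+1), F u := by
  rw [← Finset.sum_subset
    (Finset.range_subset_range.mpr (by omega) : Finset.range (m+1) ⊆ Finset.range (n+1))]
  · exact Finset.sum_congr rfl fun u hu => if_pos (by
      have := Finset.mem_range.mp hu; omega)
  · intro u hu hnu
    have h1 := Finset.mem_range.mp hu
    have h2 : ¬ u < m + 1 := fun hc => hnu (Finset.mem_range.mpr hc)
    exact if_neg (by omega)

lemma gE_expand (n j : ℕ) (hj : 2*j ≤ n) :
    g j * e (n - 2*j) = ∑ u ∈ Finset.range (n+1),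
      if u ≤ j ∧ 2*j + u ≤ n then
        g j * (b j u * ((qq^j)^(n-2*j-u) * e (n-2*j-u))) else 0 := by
  rw [e_expand j (n - 2*j), Finset.mul_sum,
    ← sum_range_ite (n-2*j) n (by omega)
      (fun u => g j * ((if u ≤ j then b j u else 0) * ((qq^j)^(n-2*j-u) * e (n-2*j-u))))]
  refine Finset.sum_congr rfl fun u hu => ?_
  by_cases h2 : u ≤ j
  · by_cases h1 : u ≤ n - 2*j
    · rw [if_pos h1, if_pos h2, if_pos (show u ≤ j ∧ 2*j + u ≤ n from by omega)]
    · rw [if_neg h1, if_neg (show ¬(u ≤ j ∧ 2*j + u ≤ n) from by omega)]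
  · by_cases h1 : u ≤ n - 2*j
    · rw [if_pos h1, if_neg h2, if_neg (show ¬(u ≤ j ∧ 2*j + u ≤ n) from by omega)]
      simp
    · rw [if_neg h1, if_neg (show ¬(u ≤ j ∧ 2*j + u ≤ n) from by omega)]

lemma goalA (n : ℕ) :
    fcoef n = ∑ j ∈ Finset.range (n/2+1), g j * e (n - 2*j) := by
  have hR : ∑ j ∈ Finset.range (n/2+1), g j * e (n - 2*j)
      = ∑ j ∈ Finset.range (n/2+1), ∑ u ∈ Finset.range (n+1),
          if u ≤ j ∧ 2*j + u ≤ n then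
            g j * (b j u * ((qq^j)^(n-2*j-u) * e (n-2*j-u))) else 0 :=
    Finset.sum_congr rfl fun j hj => gE_expand n j (by
      have := Finset.mem_range.mp hj; omega)
  rw [hR, fcoef, ← Finset.sum_product', ← Finset.sum_product',
    ← Finset.sum_filter, ← Finset.sum_filter]
  refine Finset.sum_nbij' (fun p => (p.1 + p.2, p.2)) (fun p => (p.1 - p.2, p.2))
    ?_ ?_ ?_ ?_ ?_
  · rintro ⟨t, u⟩ hp
    simp only [Finset.mem_filter, Finset.mem_product, Finset.mem_range] at hp ⊢
    omega
  · rintro ⟨j, u⟩ hp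
    simp only [Finset.mem_filter, Finset.mem_product, Finset.mem_range] at hp ⊢
    omega
  · rintro ⟨t, u⟩ hp
    simp only [Finset.mem_filter, Finset.mem_product, Finset.mem_range] at hp
    dsimp only
    rw [show t + u - u = t from by omega]
  · rintro ⟨j, u⟩ hp
    simp only [Finset.mem_filter, Finset.mem_product, Finset.mem_range] at hp
    dsimp only
    rw [show j - u + u = j from by omega]
  · rintro ⟨t, u⟩ hp
    simp only [Finset.mem_filter, Finset.mem_product, Finset.mem_range] at hp
    dsimp only
    rw [show n - 2*(t+u) - u = n - 2*t - 3*u from by omega]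
    exact termwise (n - 2*t - 3*u) t u

lemma goalB (n : ℕ) :
    PowerSeries.coeff n (Eser * Gser)
      = ∑ j ∈ Finset.range (n/2+1), g j * e (n - 2*j) := by
  rw [PowerSeries.coeff_mul, Finset.Nat.sum_antidiagonal_eq_sum_range_succ_mk]
  have h1 : ∀ k ∈ Finset.range (n+1),
      PowerSeries.coeff k Eser * PowerSeries.coeff (n-k) Gser
        = if 2 ∣ (n - k) then e k * g ((n-k)/2) else 0 := by
    intro k hk
    rw [Eser, coeff_mk, Gser, coeff_mk]
    by_cases h : 2 ∣ (n - k)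
    · rw [if_pos h, if_pos h]; rfl
    · rw [if_neg h, if_neg h, mul_zero]
  rw [Finset.sum_congr rfl h1, ← Finset.sum_filter]
  refine Finset.sum_nbij' (fun k => (n-k)/2) (fun j => n - 2*j) ?_ ?_ ?_ ?_ ?_
  · intro k hk
    simp only [Finset.mem_filter, Finset.mem_range] at hk ⊢
    omega
  · intro j hj
    simp only [Finset.mem_filter, Finset.mem_range] at hj ⊢
    omega
  · intro k hk
    simp only [Finset.mem_filter, Finset.mem_range] at hk
    omega
  · intro j hj
    simp only [Finset.mem_filter, Finset.mem_range] at hj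
    omega
  · intro k hk
    simp only [Finset.mem_filter, Finset.mem_range] at hk
    rw [show n - 2*((n-k)/2) = k from by omega]
    ring

lemma FEG : Fser = Eser * Gser := by
  refine PowerSeries.ext fun n => ?_
  rw [Fser, coeff_mk, goalA n, goalB n]

/-! ### The recursion for G -/

lemma coeff_Gser (n : ℕ) : PowerSeries.coeff n Gser
    = if 2 ∣ n then g (n/2) else 0 := by
  rw [Gser, coeff_mk]; rfl

lemma gid1 : g (0+1) = qq^2 * g (0+1) + (qq^2 + qq^3) * g 0 := by
  apply φ_inj
  simp only [g, qPoch_succ, PowerSeries.mul_inv_rev, map_add, map_mul,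
    map_pow, φ_qPoch_inv, φ_one_sub_inv]
  set P0 := φ (qPoch 0) with hP0
  set A1 := φ (1 - qq^(0+1)) with hA1
  have n0 : P0 ≠ 0 := hP0 ▸ φ_qPoch_ne 0
  have n1 : A1 ≠ 0 := hA1 ▸ φ_one_sub_qq_ne 0
  field_simp [n0, n1]
  rw [hA1]
  simp only [map_sub, map_one, map_pow]
  ring

lemma gid2' (i : ℕ) :
    g (i+1+1) + qq^7 * ((qq^2)^(2*i) * g i)
      = qq^(2*i+4) * g (i+1+1) + (qq^2+qq^3) * (qq^(2*i+2) * g (i+1)) := by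
  apply φ_inj
  simp only [g, qPoch_succ, PowerSeries.mul_inv_rev, map_add, map_mul,
    map_pow, φ_qPoch_inv, φ_one_sub_inv]
  set Pi := φ (qPoch i) with hPi
  set A1 := φ (1 - qq^(i+1)) with hA1
  set A2 := φ (1 - qq^(i+1+1)) with hA2
  have n0 : Pi ≠ 0 := hPi ▸ φ_qPoch_ne i
  have n1 : A1 ≠ 0 := hA1 ▸ φ_one_sub_qq_ne i
  have n2 : A2 ≠ 0 := hA2 ▸ φ_one_sub_qq_ne (i+1)
  field_simp [n0, n1, n2]
  rw [hA1, hA2]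
  simp only [map_sub, map_one, map_pow]
  ring

lemma gid2 (i : ℕ) :
    g (i+1+1) = qq^(2*i+4) * g (i+1+1) + (qq^2+qq^3) * (qq^(2*i+2) * g (i+1))
      - qq^7 * ((qq^2)^(2*i) * g i) := by
  linear_combination gid2' i

lemma Glem : Gser = (1 + PowerSeries.C (qq^2 + qq^3) * PowerSeries.X^2) * rescale qq Gser
    - PowerSeries.C (qq^7) * PowerSeries.X^4 * rescale (qq^2) Gser := by
  refine PowerSeries.ext fun n => ?_
  rw [show (1 + PowerSeries.C (qq^2+qq^3) * PowerSeries.X^2) * rescale qq Gser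
      - PowerSeries.C (qq^7) * PowerSeries.X^4 * rescale (qq^2) Gser
    = rescale qq Gser + (PowerSeries.C (qq^2+qq^3) * rescale qq Gser) * PowerSeries.X^2
      - (PowerSeries.C (qq^7) * rescale (qq^2) Gser) * PowerSeries.X^4 from by ring]
  rw [map_sub, map_add, PowerSeries.coeff_mul_X_pow', PowerSeries.coeff_mul_X_pow',
    coeff_C_mul, coeff_C_mul, coeff_rescale, coeff_rescale, coeff_rescale]
  simp only [coeff_Gser]
  rcases Nat.even_or_odd n with he | ho
  · obtain ⟨j, rfl⟩ : ∃ j, n = 2*j := ⟨n/2, by obtain ⟨r, hr⟩ := he; omega⟩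
    rw [if_pos (show (2:ℕ) ∣ 2*j from ⟨j, rfl⟩)]
    match j with
    | 0 =>
      norm_num
    | 1 =>
      rw [if_pos (by norm_num : 2 ≤ 2*1), if_neg (by norm_num : ¬ 4 ≤ 2*1),
        if_pos (show 2 ∣ 2*1-2 by norm_num)]
      norm_num
      linear_combination gid1
    | (i+2) =>
      rw [if_pos (by omega : 2 ≤ 2*(i+2)), if_pos (by omega : 4 ≤ 2*(i+2)),
        if_pos (show 2 ∣ 2*(i+2)-2 by omega), if_pos (show 2 ∣ 2*(i+2)-4 by omega),
        show 2*(i+2)/2 = i+1+1 from by omega, show (2*(i+2)-2)/2 = i+1 from by omega,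
        show (2*(i+2)-4)/2 = i from by omega, show 2*(i+2)-2 = 2*i+2 from by omega,
        show 2*(i+2)-4 = 2*i from by omega, show 2*(i+2) = 2*i+4 from by omega]
      linear_combination gid2 i
  · obtain ⟨j, rfl⟩ : ∃ j, n = 2*j+1 := ⟨n/2, by obtain ⟨r, hr⟩ := ho; omega⟩
    rw [if_neg (show ¬ 2 ∣ 2*j+1 from by omega)]
    by_cases h2 : 2 ≤ 2*j+1
    · rw [if_pos h2, if_neg (show ¬ 2 ∣ (2*j+1-2) from by omega)]
      by_cases h4 : 4 ≤ 2*j+1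
      · rw [if_pos h4, if_neg (show ¬ 2 ∣ (2*j+1-4) from by omega)]
        simp
      · rw [if_neg h4]
        simp
    · rw [if_neg h2, if_neg (show ¬ 4 ≤ 2*j+1 from by omega)]
      simp

/-! ### Assembly -/

lemma prodE_two : prodE 2
    = (1 + PowerSeries.C qq * PowerSeries.X)
      * (1 + PowerSeries.C (qq^2) * PowerSeries.X) := by
  simp [prodE, Finset.prod_range_succ]

lemma Euler2 : Eser = (1 + PowerSeries.C qq * PowerSeries.X)
    * ((1 + PowerSeries.C (qq^2) * PowerSeries.X) * rescale (qq^2) Eser) := by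
  have h := E_iter 2
  rw [prodE_two] at h
  exact h.trans (by ring)

/-- `F(x,q) = (1+xq)(1 + x²q² + x²q³) F(xq,q) - x⁴q⁷(1+xq)(1+xq²) F(xq²,q)`;
the substitution `x ↦ xq` is `PowerSeries.rescale q`. -/
theorem F_q_difference :
    Fser = (1 + PowerSeries.C qq * PowerSeries.X) *
          (1 + PowerSeries.C (qq ^ 2 + qq ^ 3) * PowerSeries.X ^ 2) *
          PowerSeries.rescale qq Fser -
        PowerSeries.C (qq ^ 7) * PowerSeries.X ^ 4 *
          (1 + PowerSeries.C qq * PowerSeries.X) *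
          (1 + PowerSeries.C (qq ^ 2) * PowerSeries.X) *
          PowerSeries.rescale (qq ^ 2) Fser := by
  rw [FEG, map_mul, map_mul]
  linear_combination (norm := ring_nf)
    Eser * Glem
    + ((1 + PowerSeries.C (qq^2 + qq^3) * PowerSeries.X^2) * rescale qq Gser) * Euler1
    - (PowerSeries.C (qq^7) * PowerSeries.X^4 * rescale (qq^2) Gser) * Euler2
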